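/- Let M ≥ 2 be a squarefree integer, K = ℚ(√M), and σ the nontrivial automorphism of K. If β ∈ K^× satisfies N(β) = −1, then there exists a nonzero fractional ideal 𝔟 of 𝒪_K such that the principal fractional ideal generated by β equals 𝔟 · σ(𝔟)^{−1}. -/

import Mathlib

open NumberField

/-- The real quadratic field `K = ℚ(√M)`, realized inside `ℝ`. -/
noncomputable def Ksqrt (M : ℕ) : IntermediateField ℚ ℝ :=
  IntermediateField.adjoin ℚ {Real.sqrt M}

open scoped nonZeroDivisors

theorem Ksqrt_finrank_le (M : ℕ) : Module.finrank ℚ (Ksqrt M) ≤ 2 := by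
  have hint : IsIntegral ℚ (Real.sqrt M) := by
    refine ⟨Polynomial.X ^ 2 - Polynomial.C (M : ℚ), ?_, ?_⟩
    · apply Polynomial.monic_X_pow_sub_C _ (by norm_num)
    · simp [Real.sq_sqrt (by positivity : (0:ℝ) ≤ (M:ℝ))]
  have h1 : Module.finrank ℚ (Ksqrt M) = (minpoly ℚ (Real.sqrt M)).natDegree :=
    IntermediateField.adjoin.finrank hint
  rw [h1]
  have hdvd : minpoly ℚ (Real.sqrt M) ∣ Polynomial.X ^ 2 - Polynomial.C (M : ℚ) := by
    apply minpoly.dvd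
    simp [Real.sq_sqrt (by positivity : (0:ℝ) ≤ (M:ℝ))]
  have hne : (Polynomial.X ^ 2 - Polynomial.C (M : ℚ)) ≠ 0 := by
    intro h
    have h2 := Polynomial.natDegree_X_pow_sub_C (n := 2) (r := (M : ℚ))
    rw [h] at h2; simp at h2
  calc (minpoly ℚ (Real.sqrt M)).natDegree
      ≤ (Polynomial.X ^ 2 - Polynomial.C (M : ℚ)).natDegree :=
        Polynomial.natDegree_le_of_dvd hdvd hne
    _ = 2 := Polynomial.natDegree_X_pow_sub_C

set_option maxHeartbeats 1000000 in
set_option synthInstance.maxHeartbeats 200000 in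
/-- For `M ≥ 2` squarefree, `K = ℚ(√M)` with nontrivial automorphism `σ`: if
`β ∈ K^×` has `N(β) = -1`, then there is a nonzero fractional ideal `𝔟` with
`(β) = 𝔟 · σ(𝔟)⁻¹` (here `𝔟σ` is the image fractional ideal `σ(𝔟)`). -/
theorem stmt_15 (M : ℕ) (hM : 2 ≤ M) (hsf : Squarefree M)
    [NumberField (Ksqrt M)]
    (σ : Ksqrt M ≃ₐ[ℚ] Ksqrt M) (hσ : σ ≠ AlgEquiv.refl)
    (β : Ksqrt M) (hβ0 : β ≠ 0) (hβ : Algebra.norm ℚ β = -1) :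
    ∃ b bσ : FractionalIdeal (𝓞 (Ksqrt M))⁰ (Ksqrt M), b ≠ 0 ∧
      (∀ x : Ksqrt M, x ∈ bσ ↔ ∃ y ∈ b, x = σ y) ∧
      FractionalIdeal.spanSingleton (𝓞 (Ksqrt M))⁰ β = b * bσ⁻¹ := by
  classical
  -- Step 1: the automorphism group has exactly two elements and K/ℚ is Galois
  have hfin : Module.finrank ℚ (Ksqrt M) ≤ 2 := Ksqrt_finrank_le M
  have hcard_le : Fintype.card (Ksqrt M ≃ₐ[ℚ] Ksqrt M) ≤ Module.finrank ℚ (Ksqrt M) := by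
    have h1 : Nat.card (Ksqrt M →ₐ[ℚ] Ksqrt M) ≤ Module.finrank ℚ (Ksqrt M) :=
      card_algHom_le_finrank ℚ (Ksqrt M) (Ksqrt M)
    have h2 : Fintype.card (Ksqrt M ≃ₐ[ℚ] Ksqrt M) ≤ Nat.card (Ksqrt M →ₐ[ℚ] Ksqrt M) := by
      rw [Fintype.card_eq_nat_card]
      exact Nat.card_le_card_of_injective (fun e => (e : Ksqrt M →ₐ[ℚ] Ksqrt M))
        (fun a b h => AlgEquiv.ext fun x => AlgHom.congr_fun h x)
    exact h2.trans h1
  have hcard_ge : 2 ≤ Fintype.card (Ksqrt M ≃ₐ[ℚ] Ksqrt M) :=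
    Fintype.one_lt_card_iff_nontrivial.mpr ⟨⟨σ, AlgEquiv.refl, hσ⟩⟩
  have hcard : Fintype.card (Ksqrt M ≃ₐ[ℚ] Ksqrt M) = 2 :=
    le_antisymm (hcard_le.trans hfin) hcard_ge
  have hrank : Module.finrank ℚ (Ksqrt M) = 2 := le_antisymm hfin (hcard ▸ hcard_le)
  have hgal : IsGalois ℚ (Ksqrt M) :=
    IsGalois.of_card_aut_eq_finrank ℚ (Ksqrt M) (Nat.card_eq_fintype_card.trans (hcard.trans hrank.symm))
  -- Step 2: β * σ β = -1
  have hne : (AlgEquiv.refl : Ksqrt M ≃ₐ[ℚ] Ksqrt M) ∉ ({σ} : Finset (Ksqrt M ≃ₐ[ℚ] Ksqrt M)) := by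
    simp [Ne.symm hσ]
  have huniv : (Finset.univ : Finset (Ksqrt M ≃ₐ[ℚ] Ksqrt M)) =
      insert AlgEquiv.refl ({σ} : Finset (Ksqrt M ≃ₐ[ℚ] Ksqrt M)) := by
    symm
    apply Finset.eq_univ_of_card
    rw [Finset.card_insert_of_notMem hne, Finset.card_singleton, hcard]
  have hkey : β * σ β = -1 := by
    have h := Algebra.norm_eq_prod_automorphisms (K := ℚ) (L := Ksqrt M) β
    rw [huniv, Finset.prod_insert hne, Finset.prod_singleton, hβ] at h
    simpa using h.symm
  -- Step 3: build the ideals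
  set b : FractionalIdeal (𝓞 (Ksqrt M))⁰ (Ksqrt M) :=
    1 + FractionalIdeal.spanSingleton (𝓞 (Ksqrt M))⁰ β with hb
  set bσ : FractionalIdeal (𝓞 (Ksqrt M))⁰ (Ksqrt M) :=
    1 + FractionalIdeal.spanSingleton (𝓞 (Ksqrt M))⁰ (σ β) with hbσ
  have hone_le : ∀ γ : Ksqrt M,
      (1 : FractionalIdeal (𝓞 (Ksqrt M))⁰ (Ksqrt M)) ≤
        1 + FractionalIdeal.spanSingleton (𝓞 (Ksqrt M))⁰ γ := by
    intro γ
    rw [← FractionalIdeal.sup_eq_add]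
    exact le_sup_left
  have hb0 : b ≠ 0 := by
    intro h
    have h1 := hone_le β
    rw [← hb, h] at h1
    exact one_ne_zero (le_antisymm h1 (FractionalIdeal.zero_le _))
  have hbσ0 : bσ ≠ 0 := by
    intro h
    have h1 := hone_le (σ β)
    rw [← hbσ, h] at h1
    exact one_ne_zero (le_antisymm h1 (FractionalIdeal.zero_le _))
  -- automorphisms map these ideals as expected
  have key : ∀ (τ : Ksqrt M ≃ₐ[ℚ] Ksqrt M) (γ x : Ksqrt M),
      x ∈ (1 + FractionalIdeal.spanSingleton (𝓞 (Ksqrt M))⁰ γ) →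
      τ x ∈ (1 + FractionalIdeal.spanSingleton (𝓞 (Ksqrt M))⁰ (τ γ)) := by
    intro τ γ x hx
    rw [FractionalIdeal.mem_add] at hx ⊢
    obtain ⟨u, hu, z, hz, rfl⟩ := hx
    obtain ⟨u0, hu0⟩ := (FractionalIdeal.mem_one_iff _).mp hu
    obtain ⟨r, hr⟩ := (FractionalIdeal.mem_spanSingleton _).mp hz
    have h1 : IsIntegral ℤ (τ u) := by
      rw [← hu0]
      exact map_isIntegral_int τ u0.2
    have h2 : IsIntegral ℤ (τ (algebraMap (𝓞 (Ksqrt M)) (Ksqrt M) r)) :=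
      map_isIntegral_int τ r.2
    refine ⟨τ u, (FractionalIdeal.mem_one_iff _).mpr ⟨⟨τ u, h1⟩, rfl⟩,
      τ z, (FractionalIdeal.mem_spanSingleton _).mpr
        ⟨(⟨τ (algebraMap (𝓞 (Ksqrt M)) (Ksqrt M) r), (mem_integralClosure_iff ℤ _).mpr h2⟩ : 𝓞 (Ksqrt M)), ?_⟩,
      (map_add τ u z).symm⟩
    change τ (algebraMap (𝓞 (Ksqrt M)) (Ksqrt M) r) * τ γ = τ z
    rw [← map_mul, ← Algebra.smul_def, hr]
  have hmem : ∀ x : Ksqrt M, x ∈ bσ ↔ ∃ y ∈ b, x = σ y := by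
    intro x
    constructor
    · intro hx
      refine ⟨σ.symm x, ?_, (σ.apply_symm_apply x).symm⟩
      have h := key σ.symm (σ β) x hx
      rwa [σ.symm_apply_apply, ← hb] at h
    · rintro ⟨y, hy, rfl⟩
      rw [hb] at hy
      have h := key σ β y hy
      rwa [← hbσ] at h
  -- the key multiplicative identity
  have hspan_neg_one :
      FractionalIdeal.spanSingleton (𝓞 (Ksqrt M))⁰ (-1 : Ksqrt M) = 1 := by
    ext x
    rw [FractionalIdeal.mem_spanSingleton, FractionalIdeal.mem_one_iff]
    constructor
    · rintro ⟨z, rfl⟩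
      exact ⟨-z, by simp [Algebra.smul_def]⟩
    · rintro ⟨z, rfl⟩
      exact ⟨-z, by simp [Algebra.smul_def]⟩
  have hmul : FractionalIdeal.spanSingleton (𝓞 (Ksqrt M))⁰ β * bσ = b := by
    rw [hbσ, hb, mul_add, mul_one, FractionalIdeal.spanSingleton_mul_spanSingleton,
      hkey, hspan_neg_one, add_comm]
  refine ⟨b, bσ, hb0, hmem, ?_⟩
  rw [← hmul, mul_assoc, mul_inv_cancel₀ hbσ0, mul_one]
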